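/- arXiv:2205.14516 — 4 statements merged into one kernel-verified Lean document; each statement's English description precedes it below -/
import Mathlib

section
/- Let V ⊆ ℝ² be open, let θ ∈ ℝ, let F, G : V → ℝ be C¹ functions satisfying ∂F/∂t = ∂G/∂s on V, and let x, y : V → ℝ be C² functions satisfying the system ∂x/∂t + ∂y/∂s + θ·F = 0 and ∂y/∂t − ∂x/∂s + θ·G = 0 on V. Then x is harmonic on V, i.e. ∂²x/∂s² + ∂²x/∂t² = 0 at every point of V. -/
/-- Partial derivative of a function on `ℝ × ℝ` in the direction `v`. -/
noncomputable def pderiv2 (v : ℝ × ℝ) (f : ℝ × ℝ → ℝ) (p : ℝ × ℝ) : ℝ :=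
  fderiv ℝ f p v

lemma pderiv2_pderiv2 {f : ℝ × ℝ → ℝ} {p : ℝ × ℝ}
    (hf : DifferentiableAt ℝ (fderiv ℝ f) p) (v w : ℝ × ℝ) :
    pderiv2 w (pderiv2 v f) p = fderiv ℝ (fderiv ℝ f) p w v := by
  have h := (ContinuousLinearMap.apply ℝ ℝ v).hasFDerivAt.comp p hf.hasFDerivAt
  have h2 : fderiv ℝ (fun q => fderiv ℝ f q v) p
      = (ContinuousLinearMap.apply ℝ ℝ v).comp (fderiv ℝ (fderiv ℝ f) p) := h.fderiv
  show fderiv ℝ (fun q => fderiv ℝ f q v) p w = _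
  rw [h2]
  rfl

/-- If `F, G` are `C¹` on an open set `V ⊆ ℝ²` with `∂F/∂t = ∂G/∂s` on `V`,
and `x, y` are `C²` on `V` solving `∂x/∂t + ∂y/∂s + θ·F = 0` and
`∂y/∂t − ∂x/∂s + θ·G = 0` on `V`, then `x` is harmonic on `V`. -/
theorem stmt0 (V : Set (ℝ × ℝ)) (hV : IsOpen V) (θ : ℝ)
    (F G x y : ℝ × ℝ → ℝ)
    (hF : ContDiffOn ℝ 1 F V) (hG : ContDiffOn ℝ 1 G V)
    (hx : ContDiffOn ℝ 2 x V) (hy : ContDiffOn ℝ 2 y V)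
    (hclosed : ∀ p ∈ V, pderiv2 (0, 1) F p = pderiv2 (1, 0) G p)
    (heq1 : ∀ p ∈ V, pderiv2 (0, 1) x p + pderiv2 (1, 0) y p + θ * F p = 0)
    (heq2 : ∀ p ∈ V, pderiv2 (0, 1) y p - pderiv2 (1, 0) x p + θ * G p = 0) :
    ∀ p ∈ V,
      pderiv2 (1, 0) (pderiv2 (1, 0) x) p + pderiv2 (0, 1) (pderiv2 (0, 1) x) p = 0 := by
  intro p hp
  have hmem : V ∈ nhds p := hV.mem_nhds hp
  have hyat : ContDiffAt ℝ 2 y p := hy.contDiffAt hmem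
  have hy' : DifferentiableAt ℝ (fderiv ℝ y) p :=
    (hyat.fderiv_right (m := 1) le_rfl).differentiableAt one_ne_zero
  have hFd : DifferentiableAt ℝ F p := (hF.contDiffAt hmem).differentiableAt one_ne_zero
  have hGd : DifferentiableAt ℝ G p := (hG.contDiffAt hmem).differentiableAt one_ne_zero
  have dYt : DifferentiableAt ℝ (fun q => pderiv2 (0, 1) y q) p :=
    ((ContinuousLinearMap.apply ℝ ℝ ((0 : ℝ), (1 : ℝ))).differentiable.differentiableAt).comp p hy'
  have dYs : DifferentiableAt ℝ (fun q => pderiv2 (1, 0) y q) p :=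
    ((ContinuousLinearMap.apply ℝ ℝ ((1 : ℝ), (0 : ℝ))).differentiable.differentiableAt).comp p hy'
  -- rewrite x_s and x_t using the PDE, eventually near p
  have e2 : (fun q => pderiv2 (1, 0) x q)
      =ᶠ[nhds p] fun q => pderiv2 (0, 1) y q + θ * G q := by
    filter_upwards [hmem] with q hq
    have := heq2 q hq; linarith
  have e1 : (fun q => pderiv2 (0, 1) x q)
      =ᶠ[nhds p] fun q => -(pderiv2 (1, 0) y q + θ * F q) := by
    filter_upwards [hmem] with q hq
    have := heq1 q hq; linarith
  have hA : pderiv2 (1, 0) (pderiv2 (1, 0) x) p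
      = pderiv2 (1, 0) (pderiv2 (0, 1) y) p + θ * pderiv2 (1, 0) G p := by
    have hfe := e2.fderiv_eq (𝕜 := ℝ)
    show fderiv ℝ (fun q => pderiv2 (1, 0) x q) p (1, 0) = _
    rw [hfe, fderiv_fun_add dYt (hGd.const_mul θ), fderiv_const_mul hGd]
    simp [pderiv2]
    rfl
  have hB : pderiv2 (0, 1) (pderiv2 (0, 1) x) p
      = -(pderiv2 (0, 1) (pderiv2 (1, 0) y) p + θ * pderiv2 (0, 1) F p) := by
    have hfe := e1.fderiv_eq (𝕜 := ℝ)
    show fderiv ℝ (fun q => pderiv2 (0, 1) x q) p (0, 1) = _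
    rw [hfe, fderiv_fun_neg, fderiv_fun_add dYs (hFd.const_mul θ), fderiv_const_mul hFd]
    simp [pderiv2]
    rfl
  have hsymm := hyat.isSymmSndFDerivAt (by norm_num) ((1 : ℝ), (0 : ℝ)) ((0 : ℝ), (1 : ℝ))
  have h1 := pderiv2_pderiv2 (f := y) hy' ((0 : ℝ), (1 : ℝ)) ((1 : ℝ), (0 : ℝ))
  have h2 := pderiv2_pderiv2 (f := y) hy' ((1 : ℝ), (0 : ℝ)) ((0 : ℝ), (1 : ℝ))
  have hcl := hclosed p hp
  rw [hA, hB, h1, h2]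
  rw [hsymm, hcl]
  ring
end

section
/- Let F, G : ℝ² → ℝ be functions. Suppose that for each p = (s,t,x,y) ∈ ℝ⁴ we are given a linear map J_p : ℝ⁴ → ℝ⁴ with J_p ∘ J_p = −id, J_p(e_x) = e_y, and J_p(e_s − x·F(s,t)·e_y) = e_t − x·G(s,t)·e_y. Let U ⊆ ℝ² be open, let x, y : U → ℝ be differentiable, and define u : U → ℝ⁴ by u(s,t) = (s, t, x(s,t), y(s,t)). Then J_{u(s,t)}(∂u/∂s(s,t)) = ∂u/∂t(s,t) for all (s,t) ∈ U if and only if the pair (x,y) solves the system ∂x/∂t + ∂y/∂s + x·F = 0 and ∂y/∂t − ∂x/∂s + x·G = 0 on U. -/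
/-- Partial derivative of a function on `ℝ × ℝ` in the direction `v`. -/
noncomputable def pd2 (v : ℝ × ℝ) (f : ℝ × ℝ → ℝ) (p : ℝ × ℝ) : ℝ :=
  fderiv ℝ f p v

/-- the dictionary lemma: a section `u(s,t) = (s,t,x(s,t),y(s,t))` is
`J`-holomorphic iff `(x,y)` solves the first-order system
`∂x/∂t + ∂y/∂s + x·F = 0`, `∂y/∂t − ∂x/∂s + x·G = 0`. -/
theorem stmt1 (F G : ℝ × ℝ → ℝ)
    (J : (ℝ × ℝ × ℝ × ℝ) → ((ℝ × ℝ × ℝ × ℝ) →ₗ[ℝ] (ℝ × ℝ × ℝ × ℝ)))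
    (hJ2 : ∀ p v, J p (J p v) = -v)
    (hJx : ∀ p, J p (0, 0, 1, 0) = (0, 0, 0, 1))
    (hJs : ∀ p : ℝ × ℝ × ℝ × ℝ,
      J p (((1, 0, 0, 0) : ℝ × ℝ × ℝ × ℝ) - (p.2.2.1 * F (p.1, p.2.1)) • (0, 0, 0, 1)) =
        ((0, 1, 0, 0) : ℝ × ℝ × ℝ × ℝ) - (p.2.2.1 * G (p.1, p.2.1)) • (0, 0, 0, 1))
    (U : Set (ℝ × ℝ)) (hU : IsOpen U) (x y : ℝ × ℝ → ℝ)
    (hx : ∀ p ∈ U, DifferentiableAt ℝ x p) (hy : ∀ p ∈ U, DifferentiableAt ℝ y p)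
    (u : ℝ × ℝ → ℝ × ℝ × ℝ × ℝ) (hu : ∀ q : ℝ × ℝ, u q = (q.1, q.2, x q, y q)) :
    (∀ p ∈ U, J (u p) (fderiv ℝ u p (1, 0)) = fderiv ℝ u p (0, 1)) ↔
      (∀ p ∈ U,
        pd2 (0, 1) x p + pd2 (1, 0) y p + x p * F p = 0 ∧
        pd2 (0, 1) y p - pd2 (1, 0) x p + x p * G p = 0) := by
  have hJy : ∀ q : ℝ × ℝ × ℝ × ℝ, J q ((0,0,0,1) : ℝ × ℝ × ℝ × ℝ) = (0,0,-1,0) := by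
    intro q
    have h := hJ2 q (0,0,1,0)
    rw [hJx q] at h
    rw [h]
    simp [Prod.ext_iff]
  have key : ∀ (q : ℝ × ℝ × ℝ × ℝ) (A B : ℝ),
      J q ((1, 0, A, B) : ℝ × ℝ × ℝ × ℝ)
        = (0, 1, -B - q.2.2.1 * F (q.1, q.2.1), A - q.2.2.1 * G (q.1, q.2.1)) := by
    intro q A B
    have hdecomp : ((1, 0, A, B) : ℝ × ℝ × ℝ × ℝ)
        = ((((1,0,0,0) : ℝ × ℝ × ℝ × ℝ) - (q.2.2.1 * F (q.1, q.2.1)) • ((0,0,0,1) : ℝ × ℝ × ℝ × ℝ))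
            + A • ((0,0,1,0) : ℝ × ℝ × ℝ × ℝ))
          + (B + q.2.2.1 * F (q.1, q.2.1)) • ((0,0,0,1) : ℝ × ℝ × ℝ × ℝ) := by
      simp [Prod.ext_iff]
    rw [hdecomp, map_add, map_add, map_smul, map_smul, hJs q, hJx q, hJy q]
    simp [Prod.ext_iff]
    and_intros <;> first | trivial | ring
  have hderiv : ∀ p ∈ U, ∀ v : ℝ × ℝ,
      fderiv ℝ u p v = (v.1, v.2, fderiv ℝ x p v, fderiv ℝ y p v) := by
    intro p hp v
    have hue : u = fun q : ℝ × ℝ => (q.1, q.2, x q, y q) := funext hu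
    have h1 : HasFDerivAt u
        ((ContinuousLinearMap.fst ℝ ℝ ℝ).prod ((ContinuousLinearMap.snd ℝ ℝ ℝ).prod
          ((fderiv ℝ x p).prod (fderiv ℝ y p)))) p := by
      rw [hue]
      exact HasFDerivAt.prodMk hasFDerivAt_fst (HasFDerivAt.prodMk hasFDerivAt_snd
        (HasFDerivAt.prodMk ((hx p hp).hasFDerivAt) ((hy p hp).hasFDerivAt)))
    rw [h1.fderiv]
    rfl
  constructor
  · intro H p hp
    have h := H p hp
    rw [hderiv p hp (1,0), hderiv p hp (0,1), hu p] at h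
    rw [show ((p.1, p.2, x p, y p) : ℝ × ℝ × ℝ × ℝ) = ((p.1, p.2, x p, y p)) from rfl] at h
    have hk := key (p.1, p.2, x p, y p) (fderiv ℝ x p (1,0)) (fderiv ℝ y p (1,0))
    simp only [Prod.mk.eta] at hk
    rw [hk] at h
    simp only [Prod.ext_iff] at h
    obtain ⟨-, -, h3, h4⟩ := h
    unfold pd2
    constructor <;> linarith
  · intro H p hp
    obtain ⟨h1, h2⟩ := H p hp
    unfold pd2 at h1 h2
    rw [hderiv p hp (1,0), hderiv p hp (0,1), hu p]
    have hk := key (p.1, p.2, x p, y p) (fderiv ℝ x p (1,0)) (fderiv ℝ y p (1,0))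
    simp only [Prod.mk.eta] at hk
    rw [hk]
    simp only [Prod.ext_iff]
    exact ⟨trivial, trivial, by linarith, by linarith⟩
end

section
/- Let g : ℝ² → ℝ be C¹ and let c ∈ ℝ. For (s,t) ∈ ℝ² define the linear functional β_{(s,t)}(u) := (∂g/∂s)(s,t)·u_s + (∂g/∂t)(s,t)·u_t on ℝ⁴, and for p = (s,t,x,y) ∈ ℝ⁴ define the alternating bilinear form Ω_p(u,v) := (u_x·v_y − u_y·v_x) + x·(u_x·β_{(s,t)}(v) − β_{(s,t)}(u)·v_x). Define μ : ℝ⁴ → ℝ⁴ by μ(s,t,x,y) := (s, t, x − c, y + c·g(s,t)). Then μ pulls Ω back to itself: for every p ∈ ℝ⁴ and all u, v ∈ ℝ⁴, Ω_{μ(p)}(Dμ_p(u), Dμ_p(v)) = Ω_p(u,v), where Dμ_p denotes the Fréchet derivative of μ at p. -/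
/-- The linear functional `β_{(s,t)}(u) = g_s(s,t)·u_s + g_t(s,t)·u_t` on `ℝ⁴`. -/
noncomputable def betaForm (g : ℝ × ℝ → ℝ) (st : ℝ × ℝ) (u : ℝ × ℝ × ℝ × ℝ) : ℝ :=
  fderiv ℝ g st (1, 0) * u.1 + fderiv ℝ g st (0, 1) * u.2.1

/-- The value at `p = (s,t,x,y)` of the fiberwise symplectic 2-form
`Ω = dx∧dy + d(½x²·dg)`. -/
noncomputable def OmegaForm (g : ℝ × ℝ → ℝ) (p u v : ℝ × ℝ × ℝ × ℝ) : ℝ :=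
  (u.2.2.1 * v.2.2.2 - u.2.2.2 * v.2.2.1) +
    p.2.2.1 * (u.2.2.1 * betaForm g (p.1, p.2.1) v - betaForm g (p.1, p.2.1) u * v.2.2.1)

/-- the shifting/translation trick: the diffeomorphism
`μ(s,t,x,y) = (s, t, x − c, y + c·g(s,t))` pulls the form `Ω` back to itself. -/
theorem stmt4 (g : ℝ × ℝ → ℝ) (hg : ContDiff ℝ 1 g) (c : ℝ)
    (μ : ℝ × ℝ × ℝ × ℝ → ℝ × ℝ × ℝ × ℝ)
    (hμ : ∀ p : ℝ × ℝ × ℝ × ℝ, μ p = (p.1, p.2.1, p.2.2.1 - c, p.2.2.2 + c * g (p.1, p.2.1))) :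
    ∀ (p u v : ℝ × ℝ × ℝ × ℝ),
      OmegaForm g (μ p) (fderiv ℝ μ p u) (fderiv ℝ μ p v) = OmegaForm g p u v := by
  intro p u v
  obtain rfl : μ = fun p : ℝ × ℝ × ℝ × ℝ =>
      (p.1, p.2.1, p.2.2.1 - c, p.2.2.2 + c * g (p.1, p.2.1)) := funext hμ
  set f' := fderiv ℝ g (p.1, p.2.1) with hf'
  have hgd : HasFDerivAt g f' (p.1, p.2.1) :=
    (hg.differentiable one_ne_zero).differentiableAt.hasFDerivAt
  -- projection onto the (s,t) factor
  set P : (ℝ × ℝ × ℝ × ℝ) →L[ℝ] ℝ × ℝ :=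
    (ContinuousLinearMap.fst ℝ ℝ (ℝ × ℝ × ℝ)).prod
      ((ContinuousLinearMap.fst ℝ ℝ (ℝ × ℝ)).comp
        (ContinuousLinearMap.snd ℝ ℝ (ℝ × ℝ × ℝ))) with hP
  have h1 : HasFDerivAt (fun p : ℝ × ℝ × ℝ × ℝ => g (p.1, p.2.1)) (f'.comp P) p :=
    hgd.comp p P.hasFDerivAt
  set Ps : (ℝ × ℝ × ℝ × ℝ) →L[ℝ] ℝ := ContinuousLinearMap.fst ℝ ℝ (ℝ × ℝ × ℝ)
  set Pt : (ℝ × ℝ × ℝ × ℝ) →L[ℝ] ℝ :=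
    (ContinuousLinearMap.fst ℝ ℝ (ℝ × ℝ)).comp (ContinuousLinearMap.snd ℝ ℝ (ℝ × ℝ × ℝ))
  set Px : (ℝ × ℝ × ℝ × ℝ) →L[ℝ] ℝ :=
    ((ContinuousLinearMap.fst ℝ ℝ ℝ).comp (ContinuousLinearMap.snd ℝ ℝ (ℝ × ℝ))).comp
      (ContinuousLinearMap.snd ℝ ℝ (ℝ × ℝ × ℝ))
  set Py : (ℝ × ℝ × ℝ × ℝ) →L[ℝ] ℝ :=
    ((ContinuousLinearMap.snd ℝ ℝ ℝ).comp (ContinuousLinearMap.snd ℝ ℝ (ℝ × ℝ))).comp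
      (ContinuousLinearMap.snd ℝ ℝ (ℝ × ℝ × ℝ))
  set L : (ℝ × ℝ × ℝ × ℝ) →L[ℝ] ℝ × ℝ × ℝ × ℝ :=
    Ps.prod (Pt.prod (Px.prod (Py + c • f'.comp P))) with hL
  have hμd : HasFDerivAt
      (fun p : ℝ × ℝ × ℝ × ℝ => (p.1, p.2.1, p.2.2.1 - c, p.2.2.2 + c * g (p.1, p.2.1))) L p := by
    exact HasFDerivAt.prodMk Ps.hasFDerivAt (HasFDerivAt.prodMk Pt.hasFDerivAt
      (HasFDerivAt.prodMk (HasFDerivAt.sub_const c Px.hasFDerivAt)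
        (HasFDerivAt.add Py.hasFDerivAt (h1.const_mul c))))
  rw [hμd.fderiv]
  have key : ∀ w : ℝ × ℝ × ℝ × ℝ,
      f' (w.1, w.2.1) = f' (1, 0) * w.1 + f' (0, 1) * w.2.1 := by
    intro w
    have h : (w.1, w.2.1) = w.1 • ((1 : ℝ), (0 : ℝ)) + w.2.1 • ((0 : ℝ), (1 : ℝ)) := by
      simp [Prod.ext_iff]
    rw [h, map_add, map_smul, map_smul, smul_eq_mul, smul_eq_mul]; ring
  simp only [OmegaForm, betaForm, hL, hP, ← hf']
  simp only [ContinuousLinearMap.prod_apply, ContinuousLinearMap.add_apply,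
    ContinuousLinearMap.coe_comp', Function.comp_apply, ContinuousLinearMap.smul_apply,
    ContinuousLinearMap.coe_fst', ContinuousLinearMap.coe_snd', smul_eq_mul]
  simp only [Ps, Pt, Px, Py, ContinuousLinearMap.coe_comp', Function.comp_apply,
    ContinuousLinearMap.coe_fst', ContinuousLinearMap.coe_snd']
  rw [key u, key v]
  ring
end

section
/- Let m > 0 and k ∈ ℝ, let N ≤ S be real numbers, and let χ : [N,∞) → ℝ be continuous with 0 ≤ χ(s) ≤ 1 for all s and χ(s) = 1 for all s ≥ S. Then: (a) there exists exactly one c ∈ ℝ for which there is a bounded differentiable function x : [N,∞) → ℝ with x(N) = c satisfying x'(s) = m·χ(s)·x(s) − k for all s ≥ N; and (b) every bounded differentiable solution x : [N,∞) → ℝ of this equation satisfies x(s) = k/m for all s ≥ S. -/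
open Set Real

/-- Constancy on a right half-line from vanishing right derivative. -/
lemma aux_const {f : ℝ → ℝ} {a b : ℝ} (hab : a ≤ b)
    (hf : ∀ s ∈ Set.Ici a, HasDerivWithinAt f 0 (Set.Ici a) s) : f b = f a := by
  have hcont : ContinuousOn f (Icc a b) := fun s hs =>
    ((hf s hs.1).continuousWithinAt).mono Icc_subset_Ici_self
  have hderiv : ∀ t ∈ Ico a b, HasDerivWithinAt f 0 (Ici t) t := fun t ht =>
    (hf t ht.1).mono (Ici_subset_Ici.2 ht.1)
  exact constant_of_has_deriv_right_zero hcont hderiv b ⟨hab, le_rfl⟩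

/-- Explicit formula for solutions of `x' = m x - k` on `[S, ∞)`. -/
lemma aux_rigid {m k S : ℝ} (hm : m ≠ 0) {x : ℝ → ℝ}
    (hx : ∀ s ∈ Set.Ici S, HasDerivWithinAt x (m * x s - k) (Set.Ici S) s) :
    ∀ s ∈ Set.Ici S, x s = k / m + (x S - k / m) * Real.exp (m * (s - S)) := by
  set g : ℝ → ℝ := fun s => (x s - k / m) * Real.exp (-(m * s)) with hg_def
  have hg : ∀ s ∈ Set.Ici S, HasDerivWithinAt g 0 (Set.Ici S) s := by
    intro s hs
    have hlin : HasDerivAt (fun s : ℝ => -(m * s)) (-m) s := by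
      exact (((hasDerivAt_id s).const_mul m).neg).congr_deriv (by ring)
    have he : HasDerivWithinAt (fun s : ℝ => Real.exp (-(m * s)))
        (Real.exp (-(m * s)) * (-m)) (Set.Ici S) s := (hlin.exp).hasDerivWithinAt
    have h := ((hx s hs).sub_const (k / m)).mul he
    refine h.congr_deriv (Eq.symm ?_)
    field_simp
    ring
  intro s hs
  have hgs : g s = g S := aux_const hs hg
  have hE : Real.exp (-(m * s)) ≠ 0 := Real.exp_ne_zero _
  have hgs2 : (x s - k / m) * Real.exp (-(m * s)) = (x S - k / m) * Real.exp (-(m * S)) := hgs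
  have h2 : (x s - k / m) * (Real.exp (-(m * s)) * Real.exp (m * s))
      = (x S - k / m) * (Real.exp (-(m * S)) * Real.exp (m * s)) := by
    rw [← mul_assoc, hgs2]; ring
  rw [← Real.exp_add, ← Real.exp_add] at h2
  simp only [neg_add_cancel, Real.exp_zero, mul_one] at h2
  have h3 : -(m * S) + m * s = m * (s - S) := by ring
  rw [h3] at h2
  linarith

/-- A bounded solution of the explicit formula must have `x S = k/m`. -/
lemma aux_bdd {m k S C : ℝ} (hm : 0 < m) {x : ℝ → ℝ}
    (hx : ∀ s ∈ Set.Ici S, x s = k / m + (x S - k / m) * Real.exp (m * (s - S)))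
    (hC : ∀ s ∈ Set.Ici S, |x s| ≤ C) : x S = k / m := by
  by_contra hd
  set d := x S - k / m with hd_def
  have hd0 : d ≠ 0 := sub_ne_zero.2 hd
  have hdpos : 0 < |d| := abs_pos.2 hd0
  have hC0 : 0 ≤ C := le_trans (abs_nonneg _) (hC S self_mem_Ici)
  set T := (C + |k / m|) / (m * |d|) with hT_def
  have hT0 : 0 ≤ T := div_nonneg (by positivity) (by positivity)
  have hs : S + T ∈ Set.Ici S := by simp [hT0]
  have hform := hx (S + T) hs
  have hexp : m * T + 1 ≤ Real.exp (m * T) := Real.add_one_le_exp (m * T)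
  have hTval : m * T * |d| = C + |k / m| := by
    rw [hT_def]; field_simp
  have hlow : C + |k / m| + |d| ≤ |d| * Real.exp (m * T) := by
    nlinarith [hdpos]
  have htri : |d * Real.exp (m * T)| - |-(k / m)| ≤ |d * Real.exp (m * T) - -(k / m)| :=
    abs_sub_abs_le_abs_sub _ _
  have hxval : |x (S + T)| ≤ C := hC (S + T) hs
  have h1 : (S + T - S) = T := by ring
  rw [h1] at hform
  have habs : |d| * Real.exp (m * T) - |k / m| ≤ |x (S + T)| := by
    have : x (S + T) = d * Real.exp (m * T) - -(k / m) := by rw [hform]; ring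
    rw [this]
    calc |d| * Real.exp (m * T) - |k / m|
        = |d * Real.exp (m * T)| - |-(k / m)| := by
          rw [abs_mul, Real.abs_exp, abs_neg]
      _ ≤ _ := htri
  nlinarith

/-- at the positive cylindrical end there is exactly one initial value `c`
admitting a bounded solution of `x' = m·χ(s)·x − k` on `[N,∞)`, and every bounded
solution equals `k/m` on `[S,∞)`. -/
theorem stmt6 (m k N S : ℝ) (hm : 0 < m) (hNS : N ≤ S) (χ : ℝ → ℝ)
    (hχcont : ContinuousOn χ (Set.Ici N))
    (hχ01 : ∀ s ∈ Set.Ici N, 0 ≤ χ s ∧ χ s ≤ 1)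
    (hχ1 : ∀ s, S ≤ s → χ s = 1) :
    (∃! c : ℝ, ∃ x : ℝ → ℝ, x N = c ∧
        (∀ s ∈ Set.Ici N, HasDerivWithinAt x (m * χ s * x s - k) (Set.Ici N) s) ∧
        (∃ C : ℝ, ∀ s ∈ Set.Ici N, |x s| ≤ C)) ∧
      (∀ x : ℝ → ℝ,
        (∀ s ∈ Set.Ici N, HasDerivWithinAt x (m * χ s * x s - k) (Set.Ici N) s) →
        (∃ C : ℝ, ∀ s ∈ Set.Ici N, |x s| ≤ C) →
        ∀ s, S ≤ s → x s = k / m) := by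
  have hm' : m ≠ 0 := ne_of_gt hm
  -- extended coefficient
  set χ' : ℝ → ℝ := fun t => χ (max N t) with hχ'_def
  have hχ'c : Continuous χ' :=
    hχcont.comp_continuous (continuous_const.max continuous_id) fun t => le_max_left N t
  have hχ'eq : ∀ s ∈ Set.Ici N, χ' s = χ s := fun s hs => by
    simp only [hχ'_def]; rw [max_eq_right hs]
  -- integrating factor
  set M : ℝ → ℝ := fun s => m * ∫ t in N..s, χ' t with hM_def
  have hM : ∀ s, HasDerivAt M (m * χ' s) s := fun s =>
    ((hχ'c.integral_hasStrictDerivAt N s).hasDerivAt).const_mul m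
  have hMc : Continuous M := continuous_iff_continuousAt.2 fun s => (hM s).continuousAt
  set E : ℝ → ℝ := fun s => Real.exp (-(M s)) with hE_def
  have hE : ∀ s, HasDerivAt E (-(m * χ' s) * E s) s := fun s => by
    simpa [hE_def, mul_comm] using ((hM s).neg).exp
  have hEc : Continuous E := continuous_iff_continuousAt.2 fun s => (hE s).continuousAt
  set I : ℝ → ℝ := fun s => ∫ t in N..s, E t with hI_def
  have hI : ∀ s, HasDerivAt I (E s) s := fun s =>
    (hEc.integral_hasStrictDerivAt N s).hasDerivAt
  have hMN : M N = 0 := by simp [hM_def]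
  have hIN : I N = 0 := by simp [hI_def]
  have hexpME : ∀ s, Real.exp (M s) * E s = 1 := fun s => by
    rw [hE_def, ← Real.exp_add]; simp
  -- part (b) as a general fact
  have partb : ∀ x : ℝ → ℝ,
      (∀ s ∈ Set.Ici N, HasDerivWithinAt x (m * χ s * x s - k) (Set.Ici N) s) →
      (∃ C : ℝ, ∀ s ∈ Set.Ici N, |x s| ≤ C) →
      ∀ s, S ≤ s → x s = k / m := by
    intro x hx ⟨C, hC⟩ s hs
    have hsub : Set.Ici S ⊆ Set.Ici N := Ici_subset_Ici.2 hNS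
    have hxS : ∀ t ∈ Set.Ici S, HasDerivWithinAt x (m * x t - k) (Set.Ici S) t := by
      intro t ht
      have := (hx t (hsub ht)).mono hsub
      rwa [hχ1 t ht, mul_one] at this
    have hform := aux_rigid hm' hxS
    have hCS : ∀ t ∈ Set.Ici S, |x t| ≤ C := fun t ht => hC t (hsub ht)
    have hSval : x S = k / m := aux_bdd hm hform hCS
    have := hform s hs
    rw [hSval, sub_self, zero_mul, add_zero] at this
    exact this
  refine ⟨?_, partb⟩
  -- the canonical solution
  set c₀ : ℝ := k * I S + (k / m) * E S with hc₀_def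
  set x₀ : ℝ → ℝ := fun s => Real.exp (M s) * (c₀ - k * I s) with hx₀_def
  have hx₀N : x₀ N = c₀ := by
    simp [hx₀_def, hMN, hIN]
  have hx₀S : x₀ S = k / m := by
    have : c₀ - k * I S = k / m * E S := by rw [hc₀_def]; ring
    rw [hx₀_def]
    simp only []
    rw [this, ← mul_assoc, mul_comm (Real.exp (M S)) (k / m), mul_assoc, hexpME, mul_one]
  have hx₀d : ∀ s, HasDerivAt x₀ (m * χ' s * x₀ s - k) s := by
    intro s
    have h1 : HasDerivAt (fun s => Real.exp (M s)) (Real.exp (M s) * (m * χ' s)) s := (hM s).exp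
    have h2 : HasDerivAt (fun s => c₀ - k * I s) (-(k * E s)) s := by
      simpa using (((hI s).const_mul k).const_sub c₀)
    have h := h1.mul h2
    refine h.congr_deriv (Eq.symm ?_)
    rw [hx₀_def]
    simp only []
    linear_combination k * hexpME s
  have hx₀w : ∀ s ∈ Set.Ici N, HasDerivWithinAt x₀ (m * χ s * x₀ s - k) (Set.Ici N) s := by
    intro s hs
    rw [← hχ'eq s hs]
    exact (hx₀d s).hasDerivWithinAt
  -- x₀ equals k/m on [S,∞)
  have hx₀flat : ∀ s, S ≤ s → x₀ s = k / m := by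
    have hsub : Set.Ici S ⊆ Set.Ici N := Ici_subset_Ici.2 hNS
    have hxS : ∀ t ∈ Set.Ici S, HasDerivWithinAt x₀ (m * x₀ t - k) (Set.Ici S) t := by
      intro t ht
      have := ((hx₀d t).hasDerivWithinAt (s := Set.Ici S))
      rwa [hχ'eq t (hsub ht), hχ1 t ht, mul_one] at this
    intro s hs
    have := aux_rigid hm' hxS s hs
    rw [hx₀S, sub_self, zero_mul, add_zero] at this
    exact this
  -- boundedness of x₀
  have hx₀bdd : ∃ C : ℝ, ∀ s ∈ Set.Ici N, |x₀ s| ≤ C := by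
    have hcont : ContinuousOn x₀ (Icc N S) := fun t _ => ((hx₀d t).continuousAt).continuousWithinAt
    obtain ⟨C₁, hC₁⟩ := isCompact_Icc.exists_bound_of_continuousOn hcont
    refine ⟨max C₁ |k / m|, fun s hs => ?_⟩
    rcases le_total s S with h | h
    · exact le_trans (by simpa using hC₁ s ⟨hs, h⟩) (le_max_left _ _)
    · rw [hx₀flat s h]; exact le_max_right _ _
  -- uniqueness of the initial value
  refine ⟨c₀, ⟨x₀, hx₀N, hx₀w, hx₀bdd⟩, ?_⟩
  rintro c ⟨x, hxN, hx, hxbdd⟩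
  have hxS : x S = k / m := partb x hx hxbdd S le_rfl
  set g : ℝ → ℝ := fun s => (x s - x₀ s) * E s with hg_def
  have hg : ∀ s ∈ Set.Ici N, HasDerivWithinAt g 0 (Set.Ici N) s := by
    intro s hs
    have h := ((hx s hs).sub (hx₀w s hs)).mul ((hE s).hasDerivWithinAt)
    refine h.congr_deriv (Eq.symm ?_)
    rw [hχ'eq s hs]
    simp only [Pi.sub_apply]; ring
  have hgS : g S = g N := aux_const hNS hg
  have hgS0 : g S = 0 := by
    simp [hg_def, hxS, hx₀S]
  have hEN : E N = 1 := by rw [hE_def]; simp [hMN]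
  have hgN : g N = c - c₀ := by
    simp [hg_def, hEN, hxN, hx₀N]
  have : c - c₀ = 0 := by rw [← hgN, ← hgS, hgS0]
  linarith
end
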